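/- (Bound on flux limiter from a one-sided linear constraint.) Let g⁺, g⁻ ∈ ℝ (antidiffusive fluxes), Q⁻ ≤ 0 ≤ Q⁺ real bounds, and define P⁻ = min(0, −g⁺) + min(0, g⁻), P⁺ = max(0, −g⁺) + max(0, g⁻), R⁻ = min(1, Q⁻/P⁻) if P⁻ < 0 else 1, R⁺ = min(1, Q⁺/P⁺) if P⁺ > 0 else 1. If α₊, α₋ ∈ [0,1] satisfy α₊ ≤ R := min over the appropriate one-sided ratios (α₊ ≤ R⁺ if −g⁺ > 0, α₊ ≤ R⁻ if −g⁺ < 0, similarly for α₋ and g⁻), then Q⁻ ≤ −α₊ g⁺ + α₋ g⁻ ≤ Q⁺. -/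
import Mathlib

lemma upper_piece (x c R : ℝ) (hc0 : 0 ≤ c) (hR : 0 ≤ R)
    (h : 0 < x → c ≤ R) : c * x ≤ R * max 0 x := by
  rcases le_or_gt x 0 with hx | hx
  · have : c * x ≤ 0 := mul_nonpos_of_nonneg_of_nonpos hc0 hx
    simpa [max_eq_left hx] using this
  · rw [max_eq_right hx.le]
    exact mul_le_mul_of_nonneg_right (h hx) hx.le

lemma lower_piece (x c R : ℝ) (hc0 : 0 ≤ c) (hR : 0 ≤ R)
    (h : x < 0 → c ≤ R) : R * min 0 x ≤ c * x := by
  rcases le_or_gt 0 x with hx | hx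
  · have : 0 ≤ c * x := mul_nonneg hc0 hx
    simpa [min_eq_left hx] using this
  · rw [min_eq_right hx.le]
    have := h hx
    nlinarith

/-- Bound on flux limiters from one-sided linear constraints (Zalesak-type limiter bound). -/
theorem flux_limiter_bound (gp gm Qm Qp ap am : ℝ)
    (hQm : Qm ≤ 0) (hQp : 0 ≤ Qp)
    (hap : ap ∈ Set.Icc (0 : ℝ) 1) (ham : am ∈ Set.Icc (0 : ℝ) 1) :
    let Pm := min 0 (-gp) + min 0 gm
    let Pp := max 0 (-gp) + max 0 gm
    let Rm := if Pm < 0 then min 1 (Qm / Pm) else 1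
    let Rp := if 0 < Pp then min 1 (Qp / Pp) else 1
    (0 < -gp → ap ≤ Rp) → (-gp < 0 → ap ≤ Rm) →
    (0 < gm → am ≤ Rp) → (gm < 0 → am ≤ Rm) →
    Qm ≤ -ap * gp + am * gm ∧ -ap * gp + am * gm ≤ Qp := by
  intro Pm Pp Rm Rp h1 h2 h3 h4
  obtain ⟨hap0, hap1⟩ := hap
  obtain ⟨ham0, ham1⟩ := ham
  have hPp0 : 0 ≤ Pp := add_nonneg (le_max_left _ _) (le_max_left _ _)
  have hPm0 : Pm ≤ 0 := add_nonpos (min_le_left _ _) (min_le_left _ _)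
  have hRp0 : 0 ≤ Rp := by
    unfold Rp
    split_ifs with h
    · exact le_min zero_le_one (div_nonneg hQp h.le)
    · exact zero_le_one
  have hRm0 : 0 ≤ Rm := by
    unfold Rm
    split_ifs with h
    · have : 0 ≤ Qm / Pm := by
        rw [div_nonneg_iff]; right; exact ⟨hQm, h.le⟩
      exact le_min zero_le_one this
    · exact zero_le_one
  have key : -ap * gp + am * gm = ap * (-gp) + am * gm := by ring
  constructor
  · have e1 := lower_piece (-gp) ap Rm hap0 hRm0 h2
    have e2 := lower_piece gm am Rm ham0 hRm0 h4
    have hsum : Rm * Pm ≤ -ap * gp + am * gm := by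
      rw [key]
      have : Rm * Pm = Rm * min 0 (-gp) + Rm * min 0 gm := by
        unfold Pm; ring
      rw [this]; exact add_le_add e1 e2
    refine le_trans ?_ hsum
    unfold Rm
    split_ifs with h
    · calc Qm = (Qm / Pm) * Pm := by rw [div_mul_cancel₀]; exact h.ne
        _ ≤ min 1 (Qm / Pm) * Pm := by
          apply mul_le_mul_of_nonpos_right (min_le_right _ _) h.le
    · have : Pm = 0 := le_antisymm hPm0 (not_lt.mp h)
      simp [this, hQm]
  · have e1 := upper_piece (-gp) ap Rp hap0 hRp0 h1
    have e2 := upper_piece gm am Rp ham0 hRp0 h3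
    have hsum : -ap * gp + am * gm ≤ Rp * Pp := by
      rw [key]
      have : Rp * Pp = Rp * max 0 (-gp) + Rp * max 0 gm := by
        unfold Pp; ring
      rw [this]; exact add_le_add e1 e2
    refine hsum.trans ?_
    unfold Rp
    split_ifs with h
    · calc min 1 (Qp / Pp) * Pp ≤ (Qp / Pp) * Pp :=
            mul_le_mul_of_nonneg_right (min_le_right _ _) h.le
        _ = Qp := by field_simp
    · have : Pp = 0 := le_antisymm (not_lt.mp h) hPp0
      simp [this, hQp]
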